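/- (Estimate for T₀ in the proof of Theorem 4.2) Let (X, d, μ) be a complete metric measure space, Ω ⊂ X a bounded domain such that μ is doubling on Ω, ℋ a σ-finite Borel regular measure on ∂Ω that is upper codimension-θ regular for some θ > 0, Φ an N-function satisfying the Δ'-condition, and V a Banach space. Set R = 2 diam(Ω) and, for u ∈ L^Φ(Ω, V), let T₀u : ∂Ω → V be the constant map T₀u(x) = ⨍_Ω u dμ. Then there is a constant c₁, independent of u, such that ‖T₀u‖_{L^Φ(∂Ω, V, ℋ)} ≤ c₁ Φ⁻¹(R^θ)^{-1} ‖u‖_{L^Φ(Ω, V)}. -/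

import Mathlib

open MeasureTheory Metric Set Filter Topology

noncomputable section

/-- An N-function: a continuous convex function on `[0,∞)` vanishing only at `0`,
with `Φ(x)/x → 0` as `x → 0⁺` and `Φ(x)/x → ∞` as `x → ∞`. -/
structure IsNFunction (Φ : ℝ → ℝ) : Prop where
  continuous : Continuous Φ
  convexOn : ConvexOn ℝ (Set.Ici (0:ℝ)) Φ
  map_zero : Φ 0 = 0
  pos : ∀ x : ℝ, 0 < x → 0 < Φ x
  tendsto_zero : Filter.Tendsto (fun x => Φ x / x) (nhdsWithin 0 (Set.Ioi 0)) (nhds 0)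
  tendsto_atTop : Filter.Tendsto (fun x => Φ x / x) Filter.atTop Filter.atTop

/-- The Δ'-condition with constant `C'`. -/
def HasDeltaPrime (Φ : ℝ → ℝ) (C' : ℝ) : Prop :=
  0 < C' ∧ ∀ x y : ℝ, 0 ≤ x → 0 ≤ y → Φ (x * y) ≤ C' * Φ x * Φ y

/-- The Δ'-condition. -/
def DeltaPrime (Φ : ℝ → ℝ) : Prop := ∃ C' : ℝ, HasDeltaPrime Φ C'

/-- The ∇₂-condition. -/
def Nabla2 (Φ : ℝ → ℝ) : Prop :=
  ∃ C : ℝ, 1 < C ∧ ∀ x : ℝ, 0 ≤ x → Φ x ≤ (1 / (2 * C)) * Φ (C * x)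

/-- The doubling (Δ₂) condition for a Young function. -/
def DoublingFn (Φ : ℝ → ℝ) : Prop :=
  ∃ C₂ : ℝ, 0 < C₂ ∧ ∀ x : ℝ, 0 ≤ x → Φ (2 * x) ≤ C₂ * Φ x

/-- Generalized inverse of an increasing function `Φ` on `[0,∞)`. -/
def PhiInv (Φ : ℝ → ℝ) (s : ℝ) : ℝ := sInf {t : ℝ | 0 ≤ t ∧ s ≤ Φ t}

/-- The complementary Young function `Ψ(y) = sup {xy − Φ(x) : x ≥ 0}`. -/
def YoungConjugate (Φ : ℝ → ℝ) (y : ℝ) : ℝ :=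
  sSup {z : ℝ | ∃ x : ℝ, 0 ≤ x ∧ z = x * y - Φ x}

/-- `H` is essentially weaker than `G` (`H ≺≺ G`). -/
def EssWeaker (H G : ℝ → ℝ) : Prop :=
  ∀ a : ℝ, 0 < a → ∃ x₀ : ℝ, 0 ≤ x₀ ∧ ∀ x : ℝ, x₀ ≤ x → H x ≤ G (a * x)

section MeasureDefs

variable {α : Type*} [MeasurableSpace α]

/-- The Luxemburg norm of a real-valued function. -/
def luxNorm (Φ : ℝ → ℝ) (μ : Measure α) (f : α → ℝ) : ℝ :=
  sInf {k : ℝ | 0 < k ∧ ∫⁻ x, ENNReal.ofReal (Φ (|f x| / k)) ∂μ ≤ 1}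

/-- Membership in the Orlicz space `L^Φ`. -/
def MemLPhi (Φ : ℝ → ℝ) (μ : Measure α) (f : α → ℝ) : Prop :=
  ∃ k : ℝ, 0 < k ∧ ∫⁻ x, ENNReal.ofReal (Φ (|f x| / k)) ∂μ ≤ 1

end MeasureDefs

section MetricDefs

variable {X : Type*} [PseudoMetricSpace X] [MeasurableSpace X]

/-- `u ∈ L^Φ(Ω, Z)`: `u` is a.e. strongly measurable (in particular essentially
separably valued) and `dist(u ·, z₀) ∈ L^Φ(Ω)` for some `z₀`. -/
def MemLPhiMap {Z : Type*} [PseudoMetricSpace Z] (Φ : ℝ → ℝ) (μ : Measure X) (Ω : Set X)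
    (u : X → Z) : Prop :=
  AEStronglyMeasurable u (μ.restrict Ω) ∧
    ∃ z₀ : Z, MemLPhi Φ (μ.restrict Ω) (fun x => dist (u x) z₀)

/-- `g` is a Hajlasz gradient of `u` on `Ω`. -/
def IsHajlaszGradient {Z : Type*} [PseudoMetricSpace Z] (μ : Measure X) (Ω : Set X)
    (u : X → Z) (g : X → ℝ) : Prop :=
  (∀ x, 0 ≤ g x) ∧ ∃ N : Set X, μ N = 0 ∧
    ∀ x ∈ Ω \ N, ∀ y ∈ Ω \ N, dist (u x) (u y) ≤ dist x y * (g x + g y)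

/-- Membership in the Orlicz–Hajlasz–Sobolev space `M^{1,Φ}(Ω, Z)`. -/
def MemM1Phi {Z : Type*} [PseudoMetricSpace Z] (Φ : ℝ → ℝ) (μ : Measure X) (Ω : Set X)
    (u : X → Z) : Prop :=
  MemLPhiMap Φ μ Ω u ∧
    ∃ g : X → ℝ, IsHajlaszGradient μ Ω u g ∧ MemLPhi Φ (μ.restrict Ω) g

/-- The Hajlasz energy `E_H^Φ(u)`. -/
def hajlaszEnergy {Z : Type*} [PseudoMetricSpace Z] (Φ : ℝ → ℝ) (μ : Measure X) (Ω : Set X)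
    (u : X → Z) : ℝ :=
  sInf {E : ℝ | ∃ g : X → ℝ, IsHajlaszGradient μ Ω u g ∧ MemLPhi Φ (μ.restrict Ω) g ∧
    E = luxNorm Φ (μ.restrict Ω) g}

/-- `μ` is doubling on `Ω`. -/
def DoublingOn (μ : Measure X) (Ω : Set X) : Prop :=
  ∃ Cd : NNReal, 0 < Cd ∧ ∀ x ∈ closure Ω, ∀ r : ℝ, 0 < r →
    0 < μ (ball x r ∩ Ω) ∧ μ (ball x (2 * r) ∩ Ω) ≤ (Cd : ENNReal) * μ (ball x r ∩ Ω) ∧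
      μ (ball x (2 * r) ∩ Ω) < ⊤

/-- `ℋ` is upper codimension-`θ` regular on `∂Ω` (with respect to `μ`). -/
def UpperCodimReg (H μ : Measure X) (Ω : Set X) (θ : ℝ) : Prop :=
  ∃ C₀ : NNReal, 0 < C₀ ∧ ∀ x ∈ frontier Ω, ∀ r : ℝ, 0 < r →
    ENNReal.ofReal (r ^ θ) * H (ball x r ∩ frontier Ω) ≤ (C₀ : ENNReal) * μ (ball x r ∩ Ω)

/-- The Hardy–Littlewood maximal function relative to `Ω`. -/
def maximalFn (μ : Measure X) (Ω : Set X) (g : X → ℝ) (x : X) : ℝ :=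
  sSup {t : ℝ | ∃ r : ℝ, 0 < r ∧ t = ⨍ y in ball x r ∩ Ω, |g y| ∂μ}

end MetricDefs

/-- A sequence of sets `K m ⊆ Y m` is uniformly compact. -/
def UniformlyCompact {Y : ℕ → Type*} [∀ m, PseudoMetricSpace (Y m)]
    (K : ∀ m, Set (Y m)) : Prop :=
  (∃ D : ℝ, ∀ m, Metric.diam (K m) ≤ D) ∧
    ∀ ε : ℝ, 0 < ε → ∃ N : ℕ, ∀ m, ∃ S : Finset (Y m), S.card ≤ N ∧
      K m ⊆ ⋃ y ∈ S, ball y ε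

section BanachDefs

variable {X : Type*} [PseudoMetricSpace X] [MeasurableSpace X]
variable {V : Type*} [NormedAddCommGroup V] [NormedSpace ℝ V]

/-- The pair `(u, g)` satisfies the local `Φ`-Poincaré inequality on `Ω`
with constants `CP` and `lam`. -/
def LocalPhiPoincare (Φ : ℝ → ℝ) (μ : Measure X) (Ω : Set X) (u : X → V) (g : X → ℝ)
    (CP lam : ℝ) : Prop :=
  0 < CP ∧ 1 ≤ lam ∧ ∀ x ∈ closure Ω, ∀ r : ℝ, 0 < r →
    ⨍ y in ball x r ∩ Ω, ‖u y - ⨍ z in ball x r ∩ Ω, u z ∂μ‖ ∂μ ≤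
      CP * r * PhiInv Φ (⨍ z in ball x (lam * r) ∩ Ω, Φ (g z) ∂μ)

/-- The pair `(u, g)` satisfies the local `1`-Poincaré inequality on `Ω`. -/
def Local1Poincare (μ : Measure X) (Ω : Set X) (u : X → V) (g : X → ℝ)
    (CP lam : ℝ) : Prop :=
  0 < CP ∧ 1 ≤ lam ∧ ∀ x ∈ closure Ω, ∀ r : ℝ, 0 < r →
    ⨍ y in ball x r ∩ Ω, ‖u y - ⨍ z in ball x r ∩ Ω, u z ∂μ‖ ∂μ ≤
      CP * r * ⨍ z in ball x (lam * r) ∩ Ω, g z ∂μ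

/-- The dyadic boundary averages `T_k u(x) = ⨍_{B(x, 2^{-k}R)∩Ω} u dμ`. -/
def Tavg (μ : Measure X) (Ω : Set X) (R : ℝ) (u : X → V) (k : ℕ) (x : X) : V :=
  ⨍ y in ball x ((2:ℝ) ^ (-(k:ℝ)) * R) ∩ Ω, u y ∂μ

/-- `z` is the trace value of `u` at the boundary point `x`. -/
def IsTraceAt (μ : Measure X) (Ω : Set X) (u : X → V) (x : X) (z : V) : Prop :=
  Filter.Tendsto
    (fun r : ℝ =>
      (μ (ball x r ∩ Ω))⁻¹ * ∫⁻ y in ball x r ∩ Ω, ENNReal.ofReal ‖u y - z‖ ∂μ)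
    (nhdsWithin 0 (Set.Ioi 0)) (nhds 0)

/-- `T` is a trace of `u` on `∂Ω`, `ℋ`-almost everywhere. -/
def IsTrace (μ H : Measure X) (Ω : Set X) (u : X → V) (T : X → V) : Prop :=
  ∀ᵐ x ∂(H.restrict (frontier Ω)), IsTraceAt μ Ω u x (T x)

end BanachDefs

namespace T0aux

variable {Φ : ℝ → ℝ}

lemma phi_nonneg (hΦ : IsNFunction Φ) {x : ℝ} (hx : 0 ≤ x) : 0 ≤ Φ x := by
  rcases hx.eq_or_lt with h | h
  · simp [← h, hΦ.map_zero]
  · exact (hΦ.pos x h).le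

lemma phi_smul_le (hΦ : IsNFunction Φ) {l z : ℝ} (hl0 : 0 ≤ l) (hl1 : l ≤ 1) (hz : 0 ≤ z) :
    Φ (l * z) ≤ l * Φ z := by
  have h := hΦ.convexOn.2 (Set.self_mem_Ici : (0:ℝ) ∈ Set.Ici 0) (hz : z ∈ Set.Ici 0)
    (by linarith : (0:ℝ) ≤ 1 - l) hl0 (by ring)
  simpa [hΦ.map_zero] using h

lemma phi_strictMono (hΦ : IsNFunction Φ) {t x : ℝ} (ht : 0 ≤ t) (htx : t < x) :
    Φ t < Φ x := by
  have hx : 0 < x := lt_of_le_of_lt ht htx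
  have h := phi_smul_le hΦ (l := t / x) (z := x) (div_nonneg ht hx.le)
    ((div_le_one hx).2 htx.le) hx.le
  rw [div_mul_cancel₀ _ hx.ne'] at h
  have : t / x * Φ x < Φ x := by
    have := hΦ.pos x hx
    nlinarith [(div_lt_one hx).2 htx]
  linarith

lemma phi_mono (hΦ : IsNFunction Φ) {t x : ℝ} (ht : 0 ≤ t) (htx : t ≤ x) :
    Φ t ≤ Φ x := by
  rcases htx.eq_or_lt with h | h
  · simp [h]
  · exact (phi_strictMono hΦ ht h).le

lemma phi_exists_ge (hΦ : IsNFunction Φ) (s : ℝ) : ∃ t : ℝ, 0 ≤ t ∧ s ≤ Φ t := by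
  obtain ⟨M, hM⟩ := (hΦ.tendsto_atTop.eventually_ge_atTop 1).exists_forall_of_atTop
  refine ⟨max M (max s 1), le_trans zero_le_one (le_max_of_le_right (le_max_right _ _)), ?_⟩
  set t := max M (max s 1) with ht
  have htpos : (0:ℝ) < t := lt_of_lt_of_le one_pos (le_max_of_le_right (le_max_right _ _))
  have h1 : (1:ℝ) ≤ Φ t / t := hM t (le_max_left _ _)
  have h2 : t ≤ Φ t := by
    rw [le_div_iff₀ htpos] at h1; linarith
  exact le_trans (le_max_of_le_right (le_max_left _ _)) h2

lemma phiInv_set_nonempty (hΦ : IsNFunction Φ) (s : ℝ) :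
    {t : ℝ | 0 ≤ t ∧ s ≤ Φ t}.Nonempty := by
  obtain ⟨t, ht, hts⟩ := phi_exists_ge hΦ s
  exact ⟨t, ht, hts⟩

lemma phiInv_nonneg (Φ : ℝ → ℝ) (s : ℝ) : 0 ≤ PhiInv Φ s :=
  Real.sInf_nonneg fun _ hx => hx.1

lemma phi_phiInv (hΦ : IsNFunction Φ) {s : ℝ} (hs : 0 ≤ s) : Φ (PhiInv Φ s) = s := by
  obtain ⟨b, hb0, hbs⟩ := phi_exists_ge hΦ s
  obtain ⟨c, hc, hcs⟩ := intermediate_value_Icc hb0 hΦ.continuous.continuousOn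
    (by rw [hΦ.map_zero]; exact ⟨hs, hbs⟩)
  have hclosed : IsClosed {t : ℝ | 0 ≤ t ∧ s ≤ Φ t} :=
    (isClosed_Ici.preimage continuous_id).inter (isClosed_Ici.preimage hΦ.continuous)
  have hbdd : BddBelow {t : ℝ | 0 ≤ t ∧ s ≤ Φ t} := ⟨0, fun _ hx => hx.1⟩
  have hmem : PhiInv Φ s ∈ {t : ℝ | 0 ≤ t ∧ s ≤ Φ t} :=
    hclosed.csInf_mem ⟨c, hc.1, hcs.ge⟩ hbdd
  have hle : PhiInv Φ s ≤ c := csInf_le hbdd ⟨hc.1, hcs.ge⟩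
  have := phi_mono hΦ hmem.1 hle
  rw [hcs] at this
  exact le_antisymm this hmem.2

lemma le_phiInv (hΦ : IsNFunction Φ) {x s : ℝ} (hx : 0 ≤ x) (h : Φ x ≤ s) :
    x ≤ PhiInv Φ s := by
  refine le_csInf (phiInv_set_nonempty hΦ s) fun t ht => ?_
  by_contra hlt
  push_neg at hlt
  have := phi_strictMono hΦ ht.1 hlt
  linarith [ht.2]

lemma phiInv_pos (hΦ : IsNFunction Φ) {s : ℝ} (hs : 0 < s) : 0 < PhiInv Φ s := by
  rcases (phiInv_nonneg Φ s).eq_or_lt with h | h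
  · exfalso
    have := phi_phiInv hΦ hs.le
    rw [← h, hΦ.map_zero] at this
    exact absurd this.symm hs.ne'
  · exact h

end T0aux

/-- **Estimate for `T₀` in the proof of Theorem 4.2**: the constant boundary map given by
the mean of `u` over `Ω` is bounded in `L^Φ(∂Ω, V, ℋ)` by
`c₁ Φ⁻¹(R^θ)⁻¹ ‖u‖_{L^Φ(Ω,V)}`, where `R = 2 diam Ω`. -/
theorem T0_estimate
    {X : Type*} [MetricSpace X] [CompleteSpace X] [MeasurableSpace X]
    (μ : Measure X) (Ω : Set X)
    (hΩopen : IsOpen Ω) (hΩconn : IsConnected Ω) (hΩbdd : Bornology.IsBounded Ω)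
    (hdoub : DoublingOn μ Ω)
    (H : Measure X) [SigmaFinite H] (θ : ℝ) (hθ : 0 < θ)
    (hreg : UpperCodimReg H μ Ω θ)
    (Φ : ℝ → ℝ) (hΦ : IsNFunction Φ) (hPhiDelta : DeltaPrime Φ)
    {V : Type*} [NormedAddCommGroup V] [NormedSpace ℝ V] [CompleteSpace V] :
    ∃ c₁ : ℝ, 0 < c₁ ∧ ∀ u : X → V,
      AEStronglyMeasurable u (μ.restrict Ω) →
      MemLPhi Φ (μ.restrict Ω) (fun x => ‖u x‖) →
      luxNorm Φ (H.restrict (frontier Ω)) (fun _ => ‖⨍ y in Ω, u y ∂μ‖) ≤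
        c₁ * (PhiInv Φ ((2 * Metric.diam Ω) ^ θ))⁻¹ *
          luxNorm Φ (μ.restrict Ω) (fun x => ‖u x‖) := by
  classical
  open T0aux in
  obtain ⟨C', hC'pos, hC'⟩ := hPhiDelta
  obtain ⟨Cd, hCdpos, hdoub'⟩ := hdoub
  obtain ⟨C₀, hC₀pos, hreg'⟩ := hreg
  set c₁ : ℝ := max (C' * (C₀ : ℝ)) 1 with hc₁
  have hc₁pos : 0 < c₁ := lt_of_lt_of_le one_pos (le_max_right _ _)
  refine ⟨c₁, hc₁pos, fun u hu humem => ?_⟩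
  -- basic measure facts
  obtain ⟨x₀, hx₀⟩ := hΩconn.nonempty
  have hx₀cl : x₀ ∈ closure Ω := subset_closure hx₀
  have hr₀ : (0:ℝ) < Metric.diam Ω + 1 := by positivity
  obtain ⟨hpos, -, hfin⟩ := hdoub' x₀ hx₀cl _ hr₀
  have hΩsub : Ω ⊆ ball x₀ (2 * (Metric.diam Ω + 1)) ∩ Ω := fun y hy =>
    ⟨mem_ball.2 (lt_of_le_of_lt (by
      simpa [dist_comm] using Metric.dist_le_diam_of_mem hΩbdd hy hx₀) (by linarith)), hy⟩
  have hμfin : μ Ω < ⊤ := lt_of_le_of_lt (measure_mono hΩsub) hfin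
  have hμpos : 0 < μ Ω := lt_of_lt_of_le hpos (measure_mono inter_subset_right)
  set m' : ℝ := (μ Ω).toReal with hm'def
  have hm' : 0 < m' := ENNReal.toReal_pos hμpos.ne' hμfin.ne
  rcases eq_or_lt_of_le (Metric.diam_nonneg (s := Ω)) with hd0 | hdpos
  · -- degenerate case: diam Ω = 0, so Ω is a singleton and the frontier is empty
    have hsub : Ω.Subsingleton := by
      have hne : EMetric.diam Ω ≠ ⊤ := hΩbdd.ediam_ne_top
      have h0 : EMetric.diam Ω = 0 := by
        rcases (ENNReal.toReal_eq_zero_iff _).1 hd0.symm with h | h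
        · exact h
        · exact absurd h hne
      exact EMetric.diam_eq_zero_iff.1 h0
    have hfr : frontier Ω = ∅ := by
      rw [hsub.eq_singleton_of_mem hx₀, IsOpen.frontier_eq (by
        rwa [hsub.eq_singleton_of_mem hx₀] at hΩopen), closure_singleton, diff_self]
    have hLHS : luxNorm Φ (H.restrict (frontier Ω))
        (fun _ => ‖⨍ y in Ω, u y ∂μ‖) = 0 := by
      unfold luxNorm
      rw [hfr, Measure.restrict_empty]
      have : {k : ℝ | 0 < k ∧ ∫⁻ _x, ENNReal.ofReal
          (Φ (|‖⨍ y in Ω, u y ∂μ‖| / k)) ∂(0 : Measure X) ≤ 1} = Set.Ioi 0 := by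
        ext k; simp [lintegral_zero_measure]
      rw [this, csInf_Ioi]
    rw [hLHS]
    have h1 : 0 ≤ (PhiInv Φ ((2 * Metric.diam Ω) ^ θ))⁻¹ :=
      inv_nonneg.2 (phiInv_nonneg Φ _)
    have h2 : 0 ≤ luxNorm Φ (μ.restrict Ω) (fun x => ‖u x‖) :=
      Real.sInf_nonneg fun x hx => hx.1.le
    positivity
  -- main case: diam Ω > 0
  set R : ℝ := 2 * Metric.diam Ω with hRdef
  have hRpos : 0 < R := by rw [hRdef]; linarith
  have hRθ : 0 < R ^ θ := Real.rpow_pos_of_pos hRpos θ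
  set P : ℝ := PhiInv Φ (R ^ θ) with hPdef
  have hPpos : 0 < P := phiInv_pos hΦ hRθ
  have hΦP : Φ P = R ^ θ := phi_phiInv hΦ hRθ.le
  -- boundary measure bound
  have hHb : ENNReal.ofReal (R ^ θ) * H (frontier Ω) ≤ (C₀ : ENNReal) * μ Ω := by
    rcases (frontier Ω).eq_empty_or_nonempty with hfe | ⟨xb, hxb⟩
    · simp [hfe]
    · have hxbcl : xb ∈ closure Ω := frontier_subset_closure hxb
      have hfr_sub : frontier Ω ⊆ ball xb R := by
        intro y hy
        have hycl : y ∈ closure Ω := frontier_subset_closure hy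
        have h1 : dist y xb ≤ Metric.diam (closure Ω) :=
          Metric.dist_le_diam_of_mem hΩbdd.closure hycl hxbcl
        rw [Metric.diam_closure] at h1
        exact mem_ball.2 (lt_of_le_of_lt h1 (by rw [hRdef]; linarith))
      calc ENNReal.ofReal (R ^ θ) * H (frontier Ω)
          = ENNReal.ofReal (R ^ θ) * H (ball xb R ∩ frontier Ω) := by
            rw [inter_eq_self_of_subset_right hfr_sub]
        _ ≤ (C₀ : ENNReal) * μ (ball xb R ∩ Ω) := hreg' xb hxb R hRpos
        _ ≤ (C₀ : ENNReal) * μ Ω := mul_le_mul_right (measure_mono inter_subset_right) _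
  -- the set defining the Luxemburg norm of ‖u‖
  set SU : Set ℝ := {k : ℝ | 0 < k ∧
    ∫⁻ x, ENNReal.ofReal (Φ (|‖u x‖| / k)) ∂(μ.restrict Ω) ≤ 1} with hSUdef
  have hSU_ne : SU.Nonempty := humem
  have hSU_bdd : BddBelow SU := ⟨0, fun x hx => hx.1.le⟩
  have hk_eq : luxNorm Φ (μ.restrict Ω) (fun x => ‖u x‖) = sInf SU := rfl
  set k : ℝ := sInf SU with hkdef
  have hk0 : 0 ≤ k := Real.sInf_nonneg fun x hx => hx.1.le
  -- main estimate for any κ ∈ SU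
  have main : ∀ κ ∈ SU, luxNorm Φ (H.restrict (frontier Ω))
      (fun _ => ‖⨍ y in Ω, u y ∂μ‖) ≤ c₁ * P⁻¹ * κ := by
    intro κ hκ
    obtain ⟨hκpos, hκint⟩ := hκ
    simp only [abs_norm] at hκint
    set ν : Measure X := μ.restrict Ω with hνdef
    have hνuniv : ν Set.univ = μ Ω := Measure.restrict_apply_univ _
    haveI : IsFiniteMeasure ν := ⟨by rw [hνuniv]; exact hμfin⟩
    haveI : NeZero ν := ⟨Measure.measure_univ_ne_zero.1 (by rw [hνuniv]; exact hμpos.ne')⟩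
    set f : X → ℝ := fun x => ‖u x‖ / κ with hfdef
    have hf0 : ∀ x, 0 ≤ f x := fun x => div_nonneg (norm_nonneg _) hκpos.le
    have hAESM_f : AEStronglyMeasurable f ν := by
      simpa [hfdef, div_eq_mul_inv] using hu.norm.mul_const κ⁻¹
    have hAESM_Φf : AEStronglyMeasurable (fun x => Φ (f x)) ν :=
      hΦ.continuous.comp_aestronglyMeasurable hAESM_f
    have hInt_Φf : Integrable (fun x => Φ (f x)) ν :=
      ⟨hAESM_Φf, (hasFiniteIntegral_iff_ofReal (Filter.Eventually.of_forall fun x =>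
        phi_nonneg hΦ (hf0 x))).2 (lt_of_le_of_lt hκint ENNReal.one_lt_top)⟩
    -- linear lower bound for Φ gives integrability of f
    obtain ⟨M, hM⟩ := (hΦ.tendsto_atTop.eventually_ge_atTop 1).exists_forall_of_atTop
    have hlin : ∀ z : ℝ, 0 ≤ z → z ≤ max M 0 + Φ z := by
      intro z hz
      rcases le_or_gt M z with h | h
      · rcases hz.eq_or_lt with h0 | h0
        · rw [← h0, hΦ.map_zero]; simp [le_max_right M 0]
        · have h1 : (1:ℝ) ≤ Φ z / z := hM z h
          rw [le_div_iff₀ h0] at h1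
          have : (0:ℝ) ≤ max M 0 := le_max_right M 0
          linarith
      · have : z ≤ max M 0 := le_trans h.le (le_max_left _ _)
        linarith [phi_nonneg hΦ hz]
    have hInt_f : Integrable f ν := by
      refine ⟨hAESM_f, (hasFiniteIntegral_iff_ofReal
        (Filter.Eventually.of_forall hf0)).2 ?_⟩
      calc ∫⁻ x, ENNReal.ofReal (f x) ∂ν
          ≤ ∫⁻ x, (ENNReal.ofReal (max M 0) + ENNReal.ofReal (Φ (f x))) ∂ν := by
            refine lintegral_mono fun x => ?_
            exact le_trans (ENNReal.ofReal_le_ofReal (hlin _ (hf0 x))) ENNReal.ofReal_add_le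
        _ = ENNReal.ofReal (max M 0) * ν Set.univ
              + ∫⁻ x, ENNReal.ofReal (Φ (f x)) ∂ν := by
            rw [lintegral_add_left measurable_const, lintegral_const]
        _ < ⊤ := ENNReal.add_lt_top.2 ⟨ENNReal.mul_lt_top ENNReal.ofReal_lt_top
            (by rw [hνuniv]; exact hμfin), lt_of_le_of_lt hκint ENNReal.one_lt_top⟩
    have hInt_norm : Integrable (fun x => ‖u x‖) ν := by
      refine (hInt_f.const_mul κ).congr (Filter.Eventually.of_forall fun x => ?_)
      rw [hfdef]; field_simp
    have hInt_u : Integrable u ν := (integrable_norm_iff hu).1 hInt_norm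
    -- Jensen's inequality
    have hJ : Φ (⨍ x, f x ∂ν) ≤ ⨍ x, Φ (f x) ∂ν :=
      hΦ.convexOn.map_average_le hΦ.continuous.continuousOn isClosed_Ici
        (Filter.Eventually.of_forall fun x => hf0 x) hInt_f hInt_Φf
    have havg : ⨍ x, Φ (f x) ∂ν ≤ 1 / m' := by
      rw [average_eq, smul_eq_mul, measureReal_def, hνuniv,
        integral_eq_lintegral_of_nonneg_ae (Filter.Eventually.of_forall fun x =>
          phi_nonneg hΦ (hf0 x)) hAESM_Φf]
      have h1 : (∫⁻ x, ENNReal.ofReal (Φ (f x)) ∂ν).toReal ≤ 1 := by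
        have := ENNReal.toReal_mono ENNReal.one_ne_top hκint
        simpa using this
      calc m'⁻¹ * (∫⁻ x, ENNReal.ofReal (Φ (f x)) ∂ν).toReal ≤ m'⁻¹ * 1 := by
            exact mul_le_mul_of_nonneg_left h1 (inv_nonneg.2 hm'.le)
        _ = 1 / m' := by rw [mul_one, one_div]
    -- norm of the average is at most the average of f times κ
    set a : ℝ := ‖⨍ y in Ω, u y ∂μ‖ with hadef
    have ha0 : 0 ≤ a := norm_nonneg _
    have ha : a / κ ≤ ⨍ x, f x ∂ν := by
      have h1 : a ≤ ⨍ x, ‖u x‖ ∂ν := by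
        rw [hadef]
        calc ‖⨍ y in Ω, u y ∂μ‖ = ‖(ν Set.univ).toReal⁻¹ • ∫ y, u y ∂ν‖ := by
              rw [average_eq, measureReal_def]
          _ = (ν Set.univ).toReal⁻¹ * ‖∫ y, u y ∂ν‖ := by
              rw [norm_smul, Real.norm_eq_abs, abs_of_nonneg (inv_nonneg.2 ENNReal.toReal_nonneg)]
          _ ≤ (ν Set.univ).toReal⁻¹ * ∫ y, ‖u y‖ ∂ν := by
              exact mul_le_mul_of_nonneg_left (norm_integral_le_integral_norm _)
                (inv_nonneg.2 ENNReal.toReal_nonneg)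
          _ = ⨍ x, ‖u x‖ ∂ν := by rw [average_eq, smul_eq_mul, measureReal_def]
      have h2 : (⨍ x, ‖u x‖ ∂ν) / κ = ⨍ x, f x ∂ν := by
        rw [average_eq, average_eq, smul_eq_mul, smul_eq_mul, hfdef, integral_div]
        ring
      rw [← h2]
      gcongr
    have hΦa : Φ (a / κ) ≤ 1 / m' :=
      le_trans (phi_mono hΦ (div_nonneg ha0 hκpos.le) ha) (le_trans hJ havg)
    -- the candidate Luxemburg constant
    set k' : ℝ := c₁ * P⁻¹ * κ with hk'def
    have hk'pos : 0 < k' := by positivity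
    have key : Φ (a / k') ≤ C' / (c₁ * m') * R ^ θ := by
      have h0 : a / k' = 1 / c₁ * (a / κ * P) := by
        rw [hk'def]; field_simp
      rw [h0]
      have hstep1 : Φ (1 / c₁ * (a / κ * P)) ≤ 1 / c₁ * Φ (a / κ * P) :=
        phi_smul_le hΦ (by positivity) (by
          rw [div_le_one hc₁pos]; exact le_max_right _ _) (by positivity)
      have hstep2 : Φ (a / κ * P) ≤ C' * Φ (a / κ) * Φ P :=
        hC' _ _ (div_nonneg ha0 hκpos.le) hPpos.le
      have hstep3 : C' * Φ (a / κ) * Φ P ≤ C' * (1 / m') * (R ^ θ) := by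
        rw [hΦP]
        exact mul_le_mul_of_nonneg_right
          (mul_le_mul_of_nonneg_left hΦa hC'pos.le) hRθ.le
      calc Φ (1 / c₁ * (a / κ * P)) ≤ 1 / c₁ * Φ (a / κ * P) := hstep1
        _ ≤ 1 / c₁ * (C' * Φ (a / κ) * Φ P) := by
            exact mul_le_mul_of_nonneg_left hstep2 (by positivity)
        _ ≤ 1 / c₁ * (C' * (1 / m') * R ^ θ) := by
            exact mul_le_mul_of_nonneg_left hstep3 (by positivity)
        _ = C' / (c₁ * m') * R ^ θ := by field_simp
    -- membership in the boundary Luxemburg set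
    have hmemLHS : k' ∈ {kk : ℝ | 0 < kk ∧ ∫⁻ _x, ENNReal.ofReal
        (Φ (|a| / kk)) ∂(H.restrict (frontier Ω)) ≤ 1} := by
      refine ⟨hk'pos, ?_⟩
      rw [lintegral_const, Measure.restrict_apply_univ, abs_of_nonneg ha0]
      calc ENNReal.ofReal (Φ (a / k')) * H (frontier Ω)
          ≤ ENNReal.ofReal (C' / (c₁ * m')) * (ENNReal.ofReal (R ^ θ) * H (frontier Ω)) := by
            rw [← mul_assoc, ← ENNReal.ofReal_mul (by positivity)]
            exact mul_le_mul_left (ENNReal.ofReal_le_ofReal key) _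
        _ ≤ ENNReal.ofReal (C' / (c₁ * m')) * ((C₀ : ENNReal) * μ Ω) :=
            mul_le_mul_right hHb _
        _ = ENNReal.ofReal (C' / (c₁ * m') * ((C₀ : ℝ) * m')) := by
            rw [← ENNReal.ofReal_coe_nnreal, ← ENNReal.ofReal_toReal hμfin.ne, ← hm'def,
              ← ENNReal.ofReal_mul (by positivity), ← ENNReal.ofReal_mul (by positivity)]
        _ ≤ 1 := by
            rw [← ENNReal.ofReal_one]
            apply ENNReal.ofReal_le_ofReal
            have heq : C' / (c₁ * m') * ((C₀ : ℝ) * m') = C' * (C₀ : ℝ) / c₁ := by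
              field_simp
            rw [heq]
            exact div_le_one_of_le₀ (le_max_left _ _) hc₁pos.le
    exact csInf_le ⟨0, fun x hx => hx.1.le⟩ hmemLHS
  -- pass to the infimum via an ε-argument
  have hmemeps : ∀ ε : ℝ, 0 < ε → k + ε ∈ SU := by
    intro ε hε
    obtain ⟨k₀, hk₀S, hk₀lt⟩ := (csInf_lt_iff hSU_bdd hSU_ne).1
      (lt_add_of_pos_right k hε)
    refine ⟨by linarith [hk₀S.1], ?_⟩
    refine le_trans (lintegral_mono fun x => ?_) hk₀S.2
    apply ENNReal.ofReal_le_ofReal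
    apply phi_mono hΦ (div_nonneg (abs_nonneg _) (by linarith [hk₀S.1]))
    exact div_le_div_of_nonneg_left (abs_nonneg _) hk₀S.1 hk₀lt.le
  rw [hk_eq]
  set L : ℝ := luxNorm Φ (H.restrict (frontier Ω)) (fun _ => ‖⨍ y in Ω, u y ∂μ‖) with hLdef
  have hCpos : 0 < c₁ * P⁻¹ := by positivity
  by_contra hcon
  push_neg at hcon
  have hδ : 0 < (L - c₁ * P⁻¹ * k) / (2 * (c₁ * P⁻¹)) :=
    div_pos (by linarith) (by positivity)
  have h2 : L ≤ c₁ * P⁻¹ * (k + (L - c₁ * P⁻¹ * k) / (2 * (c₁ * P⁻¹))) :=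
    main _ (hmemeps _ hδ)
  have h3 : c₁ * P⁻¹ * ((L - c₁ * P⁻¹ * k) / (2 * (c₁ * P⁻¹))) = (L - c₁ * P⁻¹ * k) / 2 := by
    field_simp
  rw [mul_add, h3] at h2
  linarith
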